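/- For every index 𝐤 = (k₁, …, kₙ) of depth n ≥ 1 and every complex t with |t| ≤ 1/2, one has |Ath(𝐤; t)| ≤ T(k₁, …, k_{n−1}, kₙ+1) ≤ T(1, …, 1, 2) (n−1 ones followed by 2). Consequently, for all k, n ≥ 1, s ≥ 0 and |t| ≤ 1/2, |G(k,n,s;t)| ≤ 2^{n+1} · C(k−1, n−1), where C denotes the binomial coefficient. -/

import Mathlib

open Complex Filter Metric Finset

attribute [local instance] Classical.propDecidable

noncomputable section

/-- Condition on the summation variables of the level-two multiple polylogarithm:
`m` is strictly increasing, `m i ≡ i+1 (mod 2)` (so `m 0` is odd, `m 1` even, ...),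
and all `m i` are positive. -/
def athCond (n : ℕ) (m : Fin n → ℕ) : Prop :=
  StrictMono m ∧ ∀ i : Fin n, m i % 2 = ((i : ℕ) + 1) % 2 ∧ 0 < m i

/-- The last entry `m n` of the summation sequence (junk value `0` for depth `0`). -/
def lastExp {n : ℕ} (m : Fin n → ℕ) : ℕ :=
  if h : 0 < n then m ⟨n - 1, Nat.sub_lt h Nat.one_pos⟩ else 0

/-- The level-two multiple polylogarithm
`Ath(𝐤; t) = Σ_{0<m₁<⋯<mₙ, mᵢ ≡ i (2)} t^{mₙ}/(m₁^{k₁}⋯mₙ^{kₙ})`, with `Ath(∅;t) = 1`. -/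
def Ath {n : ℕ} (k : Fin n → ℕ) (t : ℂ) : ℂ :=
  ∑' m : Fin n → ℕ,
    if athCond n m then t ^ lastExp m / ∏ i, ((m i : ℂ) ^ k i) else 0

/-- The multiple T-value `T(𝐤) = 2^n Σ_{0<m₁<⋯<mₙ, mᵢ ≡ i (2)} 1/(m₁^{k₁}⋯mₙ^{kₙ})`. -/
def Tval {n : ℕ} (k : Fin n → ℕ) : ℝ :=
  2 ^ n * ∑' m : Fin n → ℕ,
    if athCond n m then (∏ i, ((m i : ℝ) ^ k i))⁻¹ else 0

/-- `κ` is an index of weight `k`, depth `n` and height `s`. -/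
def IdxCond (k n s : ℕ) (κ : Fin n → ℕ) : Prop :=
  (∀ i, 1 ≤ κ i) ∧ (∑ i, κ i) = k ∧ (Finset.univ.filter fun i => 2 ≤ κ i).card = s

/-- `κ` is an admissible index of weight `k`, depth `n` and height `s`. -/
def IdxCond0 (k n s : ℕ) (κ : Fin n → ℕ) : Prop :=
  IdxCond k n s κ ∧ ∀ h : 0 < n, 2 ≤ κ ⟨n - 1, Nat.sub_lt h Nat.one_pos⟩

/-- `G(k,n,s;t) = 2^n Σ_{𝐤 ∈ I(k,n,s)} Ath(𝐤;t)`. -/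
def G (k n s : ℕ) (t : ℂ) : ℂ :=
  2 ^ n * ∑' κ : Fin n → ℕ, if IdxCond k n s κ then Ath κ t else 0

/-- `G₀(k,n,s;t) = 2^n Σ_{𝐤 ∈ I₀(k,n,s)} Ath(𝐤;t)`. -/
def G0 (k n s : ℕ) (t : ℂ) : ℂ :=
  2 ^ n * ∑' κ : Fin n → ℕ, if IdxCond0 k n s κ then Ath κ t else 0

/-- `Σ_{𝐤 ∈ I₀(k,n,s)} T(𝐤)`. -/
def sumT0 (k n s : ℕ) : ℝ :=
  ∑' κ : Fin n → ℕ, if IdxCond0 k n s κ then Tval κ else 0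

/-- One term of the generating function `Φ`. -/
def PhiTerm (x y z : ℂ) (p : ℕ × ℕ × ℕ) (t : ℂ) : ℂ :=
  if 1 ≤ p.1 ∧ 1 ≤ p.2.1 then
    G p.1 p.2.1 p.2.2 t * x ^ (p.1 - p.2.1 - p.2.2) * y ^ (p.2.1 - p.2.2) * z ^ (2 * p.2.2)
  else 0

/-- `Φ(x,y,z;t) = 1 + Σ_{k,n≥1, s≥0} G(k,n,s;t) x^{k−n−s} y^{n−s} z^{2s}`. -/
def Phi (x y z t : ℂ) : ℂ := 1 + ∑' p : ℕ × ℕ × ℕ, PhiTerm x y z p t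

/-- One term of the generating function `Φ₀`. -/
def Phi0Term (x y z : ℂ) (p : ℕ × ℕ × ℕ) (t : ℂ) : ℂ :=
  if 1 ≤ p.1 ∧ 1 ≤ p.2.1 ∧ 1 ≤ p.2.2 then
    G0 p.1 p.2.1 p.2.2 t * x ^ (p.1 - p.2.1 - p.2.2) * y ^ (p.2.1 - p.2.2)
      * z ^ (2 * (p.2.2 - 1))
  else 0

/-- `Φ₀(x,y,z;t) = Σ_{k,n,s≥1} G₀(k,n,s;t) x^{k−n−s} y^{n−s} z^{2(s−1)}`. -/
def Phi0 (x y z t : ℂ) : ℂ := ∑' p : ℕ × ℕ × ℕ, Phi0Term x y z p t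

/-- The shifted factorial `(a)ₙ = a(a+1)⋯(a+n−1)`. -/
def poch (a : ℂ) (n : ℕ) : ℂ := ∏ j ∈ Finset.range n, (a + j)

/-- The Gauss hypergeometric series `F(a,b,c;t)`. -/
def hypF (a b c t : ℂ) : ℂ :=
  ∑' n : ℕ, poch a n * poch b n / ((n.factorial : ℂ) * poch c n) * t ^ n

/-! ### Auxiliary lemmas -/

lemma athCond_one_le {n : ℕ} {m : Fin n → ℕ} (h : athCond n m) (i : Fin n) : 1 ≤ m i :=
  (h.2 i).2

lemma athCond_le_last {n : ℕ} (hn : 0 < n) {m : Fin n → ℕ} (h : athCond n m) (i : Fin n) :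
    m i ≤ m ⟨n - 1, Nat.sub_lt hn Nat.one_pos⟩ :=
  h.1.monotone (by simp only [Fin.le_def]; omega)

lemma pi_prod_hasSum {f : ℕ → ℝ} (hf : Summable f) (h0 : ∀ x, 0 ≤ f x) :
    ∀ n : ℕ, Summable (fun m : Fin n → ℕ => ∏ i, f (m i)) ∧
      (∑' m : Fin n → ℕ, ∏ i, f (m i)) = (∑' x, f x) ^ n := by
  intro n
  induction n with
  | zero =>
    have h1 : HasSum (fun m : Fin 0 → ℕ => ∏ i, f (m i)) 1 := by
      have := hasSum_single (f := fun m : Fin 0 → ℕ => ∏ i, f (m i)) default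
        (fun b hb => absurd (Subsingleton.elim b default) hb)
      simpa using this
    exact ⟨h1.summable, by rw [h1.tsum_eq]; simp⟩
  | succ n ih =>
    have h1 : (0:ℕ→ℝ) ≤ f := h0
    have h2 : (0:(Fin n → ℕ)→ℝ) ≤ (fun m : Fin n → ℕ => ∏ i, f (m i)) :=
      fun m => Finset.prod_nonneg fun i _ => h0 _
    have key : Summable (fun p : ℕ × (Fin n → ℕ) => f p.1 * ∏ i, f (p.2 i)) :=
      Summable.mul_of_nonneg (f := f) (g := fun m : Fin n → ℕ => ∏ i, f (m i)) hf ih.1 h1 h2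
    let e : (ℕ × (Fin n → ℕ)) ≃ (Fin (n+1) → ℕ) := Fin.consEquiv fun _ => ℕ
    have he : ∀ p : ℕ × (Fin n → ℕ),
        (∏ i, f ((e p) i)) = f p.1 * ∏ i, f (p.2 i) := by
      intro p
      rw [Fin.prod_univ_succ]
      simp [e, Fin.consEquiv]
    constructor
    · exact (e.summable_iff (f := fun m : Fin (n+1) → ℕ => ∏ i, f (m i))).mp
        (key.congr fun p => (he p).symm)
    · rw [← e.tsum_eq (fun m : Fin (n+1) → ℕ => ∏ i, f (m i)), tsum_congr he,
        ← Summable.tsum_mul_tsum hf ih.1 key, ih.2, pow_succ]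
      ring

/-! ### gap parametrization -/

def gapMap (n : ℕ) (d : Fin n → ℕ) : Fin n → ℕ := fun i => ∑ j ∈ Finset.Iic i, (d j + 1)

lemma gapMap_split {n v : ℕ} (hv : v < n) (d : Fin n → ℕ) :
    gapMap n d ⟨v, hv⟩ = d ⟨v, hv⟩ + 1 + ∑ j ∈ Finset.Iio (⟨v, hv⟩ : Fin n), (d j + 1) := by
  unfold gapMap
  rw [← Finset.Iio_insert, Finset.sum_insert (by simp)]

lemma gapMap_injective (n : ℕ) : Function.Injective (gapMap n) := by
  intro d d' h
  suffices H : ∀ v (hv : v < n), d ⟨v, hv⟩ = d' ⟨v, hv⟩ by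
    funext i; obtain ⟨v, hv⟩ := i; exact H v hv
  intro v
  induction v using Nat.strong_induction_on with
  | _ v ih =>
    intro hv
    have h1 := congrFun h (⟨v, hv⟩ : Fin n)
    rw [gapMap_split, gapMap_split] at h1
    have h2 : ∑ j ∈ Finset.Iio (⟨v, hv⟩ : Fin n), (d j + 1)
        = ∑ j ∈ Finset.Iio (⟨v, hv⟩ : Fin n), (d' j + 1) := by
      apply Finset.sum_congr rfl
      intro j hj
      have hjv : j.val < v := by simpa [Finset.mem_Iio, Fin.lt_def] using hj
      have := ih j.val hjv j.isLt
      simp only [Fin.eta] at this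
      omega
    omega

lemma gapMap_surj {n : ℕ} {m : Fin n → ℕ} (hm : StrictMono m) (hp : ∀ i, 0 < m i) :
    ∃ d, gapMap n d = m := by
  classical
  refine ⟨fun i => if i.val = 0 then m i - 1 else m i - m ⟨i.val - 1, by omega⟩ - 1, ?_⟩
  funext i
  suffices H : ∀ v (hv : v < n), gapMap n
      (fun i : Fin n => if i.val = 0 then m i - 1 else m i - m ⟨i.val - 1, by omega⟩ - 1)
      ⟨v, hv⟩ = m ⟨v, hv⟩ by
    obtain ⟨v, hv⟩ := i; exact H v hv
  intro v
  induction v using Nat.strong_induction_on with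
  | _ v ih =>
    intro hv
    rw [gapMap_split]
    rcases Nat.eq_zero_or_pos v with h0 | h0
    · subst h0
      have : Finset.Iio (⟨0, hv⟩ : Fin n) = ∅ := by
        ext j; simp [Finset.mem_Iio, Fin.lt_def]
      rw [this]
      have := hp ⟨0, hv⟩
      simp only [Finset.sum_empty, ite_true, eq_self_iff_true, if_true]
      simp
      omega
    · obtain ⟨w, rfl⟩ : ∃ w, v = w + 1 := ⟨v - 1, by omega⟩
      have hIio : Finset.Iio (⟨w + 1, hv⟩ : Fin n) = Finset.Iic (⟨w, by omega⟩ : Fin n) := by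
        ext j
        simp only [Finset.mem_Iio, Finset.mem_Iic, Fin.lt_def, Fin.le_def]
        omega
      rw [hIio]
      have hw := ih w (by omega) (by omega)
      rw [show (∑ j ∈ Finset.Iic (⟨w, by omega⟩ : Fin n),
        ((fun i : Fin n => if i.val = 0 then m i - 1 else m i - m ⟨i.val - 1, by omega⟩ - 1) j + 1))
        = gapMap n _ ⟨w, by omega⟩ from rfl, hw]
      have hlt : m ⟨w, by omega⟩ < m ⟨w + 1, hv⟩ := hm (by simp [Fin.lt_def])
      simp only [if_neg (by omega : ¬ (w + 1 = 0))]
      have : (⟨w + 1 - 1, by omega⟩ : Fin n) = ⟨w, by omega⟩ := by simp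
      rw [this]
      omega

lemma gapMap_last {n : ℕ} (hn : 0 < n) (d : Fin n → ℕ) :
    gapMap n d ⟨n - 1, Nat.sub_lt hn Nat.one_pos⟩ = n + ∑ j, d j := by
  unfold gapMap
  have : Finset.Iic (⟨n - 1, Nat.sub_lt hn Nat.one_pos⟩ : Fin n) = Finset.univ := by
    apply Finset.eq_univ_iff_forall.mpr
    intro j
    simp only [Finset.mem_Iic, Fin.le_def]
    omega
  rw [this, Finset.sum_add_distrib]
  simp [add_comm]

/-! ### Summability of the `T`-value series -/

lemma TT_bound {n : ℕ} (hn : 0 < n) (c : Fin n → ℕ) (hc : ∀ i, 1 ≤ c i)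
    (hlast : 2 ≤ c ⟨n - 1, Nat.sub_lt hn Nat.one_pos⟩) {m : Fin n → ℕ} (h : athCond n m) :
    (∏ i, ((m i : ℝ) ^ c i))⁻¹ ≤ ∏ i, (m i : ℝ) ^ (-(1 + 1/(n:ℝ))) := by
  set last : Fin n := ⟨n - 1, Nat.sub_lt hn Nat.one_pos⟩
  have hm1 : ∀ i, (1:ℝ) ≤ (m i : ℝ) := fun i => by exact_mod_cast athCond_one_le h i
  set P : ℝ := ∏ i, (m i : ℝ) with hP
  have hP1 : (1:ℝ) ≤ P := by
    rw [hP]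
    calc (1:ℝ) = ∏ _i : Fin n, 1 := by simp
      _ ≤ ∏ i, (m i : ℝ) := Finset.prod_le_prod (fun i _ => zero_le_one) (fun i _ => hm1 i)
  have hP0 : (0:ℝ) < P := lt_of_lt_of_le one_pos hP1
  have hprod : ∏ i, (m i : ℝ) ^ (-(1 + 1/(n:ℝ))) = P ^ (-(1 + 1/(n:ℝ))) :=
    Real.finset_prod_rpow _ _ (fun i _ => Nat.cast_nonneg _) _
  rw [hprod, Real.rpow_neg hP0.le]
  apply inv_anti₀
  · exact Real.rpow_pos_of_pos hP0 _
  have hPn : P ^ (1 + 1/(n:ℝ)) = P * P ^ (1/(n:ℝ)) := by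
    rw [Real.rpow_add hP0, Real.rpow_one]
  have hL : (m last : ℝ) ^ (n:ℕ) = ∏ i : Fin n, (m last : ℝ) := by
    simp [Finset.prod_const]
  have hPle : P ≤ (m last : ℝ) ^ (n:ℕ) := by
    rw [hL]
    exact Finset.prod_le_prod (fun i _ => Nat.cast_nonneg _)
      (fun i _ => by exact_mod_cast athCond_le_last hn h i)
  have hroot : P ^ (1/(n:ℝ)) ≤ (m last : ℝ) := by
    calc P ^ (1/(n:ℝ)) ≤ ((m last : ℝ) ^ (n:ℕ)) ^ (1/(n:ℝ)) :=
          Real.rpow_le_rpow hP0.le hPle (by positivity)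
      _ = (m last : ℝ) := by
          rw [← Real.rpow_natCast ((m last : ℝ)) n, ← Real.rpow_mul (Nat.cast_nonneg _),
            mul_one_div_cancel (by exact_mod_cast hn.ne' : (n:ℝ) ≠ 0), Real.rpow_one]
  calc P ^ (1 + 1/(n:ℝ)) = P * P ^ (1/(n:ℝ)) := hPn
    _ ≤ P * (m last : ℝ) := by
        apply mul_le_mul_of_nonneg_left hroot hP0.le
    _ = ∏ i, ((m i : ℝ) * if i = last then (m i : ℝ) else 1) := by
        rw [Finset.prod_mul_distrib, Finset.prod_ite_eq' Finset.univ last (fun i => (m i : ℝ))]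
        simp [hP]
    _ ≤ ∏ i, (m i : ℝ) ^ c i := by
        apply Finset.prod_le_prod
        · intro i _
          split <;> positivity
        · intro i _
          by_cases hi : i = last
          · rw [if_pos hi]
            calc (m i : ℝ) * (m i : ℝ) = (m i : ℝ) ^ (2:ℕ) := (sq _).symm
              _ ≤ (m i : ℝ) ^ c i := pow_le_pow_right₀ (hm1 i) (hi ▸ hlast)
          · rw [if_neg hi, mul_one]
            exact le_self_pow₀ (hm1 i) (by have := hc i; omega)

lemma TT_summable {n : ℕ} (hn : 0 < n) (c : Fin n → ℕ) (hc : ∀ i, 1 ≤ c i)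
    (hlast : 2 ≤ c ⟨n - 1, Nat.sub_lt hn Nat.one_pos⟩) :
    Summable (fun m : Fin n → ℕ => if athCond n m then (∏ i, ((m i : ℝ) ^ c i))⁻¹ else 0) := by
  have hp : -(1 + 1/(n:ℝ)) < -1 := by
    have : (0:ℝ) < 1/(n:ℝ) := by positivity
    linarith
  have hf : Summable (fun x : ℕ => (x:ℝ) ^ (-(1 + 1/(n:ℝ)))) := Real.summable_nat_rpow.mpr hp
  have h0 : ∀ x : ℕ, 0 ≤ (x:ℝ) ^ (-(1 + 1/(n:ℝ))) := fun x => Real.rpow_nonneg (Nat.cast_nonneg x) _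
  obtain ⟨hs, -⟩ := pi_prod_hasSum hf h0 n
  refine Summable.of_nonneg_of_le (fun m => ?_) (fun m => ?_) hs
  · by_cases h : athCond n m
    · rw [if_pos h]; positivity
    · rw [if_neg h]
  · by_cases h : athCond n m
    · rw [if_pos h]; exact TT_bound hn c hc hlast h
    · rw [if_neg h]; exact Finset.prod_nonneg fun i _ => h0 _

/-! ### Pointwise bounds on the summands of `Ath` -/

lemma athTerm_norm_eq {n : ℕ} (k : Fin n → ℕ) (t : ℂ) (m : Fin n → ℕ) :
    ‖t ^ lastExp m / ∏ i, ((m i : ℂ) ^ k i)‖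
      = ‖t‖ ^ lastExp m / ∏ i, ((m i : ℝ) ^ k i) := by
  rw [norm_div, norm_pow, norm_prod]
  congr 1
  exact Finset.prod_congr rfl fun i _ => by
    rw [norm_pow, Complex.norm_natCast]

lemma half_pow_le_inv {v : ℕ} (hv : 1 ≤ v) : ((1:ℝ)/2) ^ v ≤ (v:ℝ)⁻¹ := by
  rw [div_pow, one_pow, one_div]
  apply inv_anti₀ (by exact_mod_cast hv)
  exact_mod_cast (Nat.lt_two_pow_self (n := v)).le

lemma prod_update_last {n : ℕ} (hn : 0 < n) (k : Fin n → ℕ) (m : Fin n → ℕ) :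
    (∏ i, ((m i : ℝ) ^ (Function.update k ⟨n - 1, Nat.sub_lt hn Nat.one_pos⟩
        (k ⟨n - 1, Nat.sub_lt hn Nat.one_pos⟩ + 1)) i))
      = (∏ i, ((m i : ℝ) ^ k i)) * (m ⟨n - 1, Nat.sub_lt hn Nat.one_pos⟩ : ℝ) := by
  set last : Fin n := ⟨n - 1, Nat.sub_lt hn Nat.one_pos⟩
  have : ∀ i, (m i : ℝ) ^ (Function.update k last (k last + 1)) i
      = (m i : ℝ) ^ k i * (if i = last then (m i : ℝ) else 1) := by
    intro i
    rw [Function.update_apply]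
    by_cases hi : i = last
    · rw [if_pos hi, if_pos hi, hi, pow_succ]
    · rw [if_neg hi, if_neg hi, mul_one]
  rw [Finset.prod_congr rfl fun i _ => this i, Finset.prod_mul_distrib,
    Finset.prod_ite_eq' Finset.univ last (fun i => (m i : ℝ))]
  simp

lemma athTerm_le {n : ℕ} (hn : 0 < n) (k : Fin n → ℕ) {t : ℂ} (ht : ‖t‖ ≤ 1/2)
    (m : Fin n → ℕ) :
    ‖if athCond n m then t ^ lastExp m / ∏ i, ((m i : ℂ) ^ k i) else 0‖
      ≤ (if athCond n m then (∏ i, ((m i : ℝ) ^ (Function.update k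
          ⟨n - 1, Nat.sub_lt hn Nat.one_pos⟩
          (k ⟨n - 1, Nat.sub_lt hn Nat.one_pos⟩ + 1)) i))⁻¹ else 0) := by
  set last : Fin n := ⟨n - 1, Nat.sub_lt hn Nat.one_pos⟩
  by_cases h : athCond n m
  · rw [if_pos h, if_pos h, athTerm_norm_eq, prod_update_last hn, lastExp, dif_pos hn]
    have hm1 : ∀ i, (1:ℝ) ≤ (m i : ℝ) := fun i => by exact_mod_cast athCond_one_le h i
    have hpp : (0:ℝ) < ∏ i, ((m i : ℝ) ^ k i) :=
      Finset.prod_pos fun i _ => pow_pos (lt_of_lt_of_le one_pos (hm1 i)) _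
    rw [div_eq_mul_inv, mul_inv, mul_comm ((∏ i, ((m i:ℝ) ^ k i))⁻¹)]
    apply mul_le_mul_of_nonneg_right _ (by positivity)
    calc ‖t‖ ^ m last ≤ ((1:ℝ)/2) ^ m last := pow_le_pow_left₀ (norm_nonneg t) ht _
      _ ≤ ((m last : ℕ) : ℝ)⁻¹ := half_pow_le_inv (athCond_one_le h last)
  · rw [if_neg h, if_neg h, norm_zero]

lemma summable_athTerm_norm {n : ℕ} (hn : 0 < n) (k : Fin n → ℕ) (hk : ∀ i, 1 ≤ k i)
    {t : ℂ} (ht : ‖t‖ ≤ 1/2) :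
    Summable (fun m : Fin n → ℕ =>
      ‖if athCond n m then t ^ lastExp m / ∏ i, ((m i : ℂ) ^ k i) else 0‖) := by
  set last : Fin n := ⟨n - 1, Nat.sub_lt hn Nat.one_pos⟩
  have hsum := TT_summable hn (Function.update k last (k last + 1))
    (fun i => by
      rw [Function.update_apply]
      split
      · omega
      · exact hk i)
    (by rw [Function.update_self]; have := hk last; omega)
  exact Summable.of_nonneg_of_le (fun m => norm_nonneg _) (athTerm_le hn k ht) hsum

lemma ath_le_Tval {n : ℕ} (hn : 0 < n) (k : Fin n → ℕ) (hk : ∀ i, 1 ≤ k i)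
    {t : ℂ} (ht : ‖t‖ ≤ 1/2) :
    ‖Ath k t‖ ≤ Tval (Function.update k ⟨n - 1, Nat.sub_lt hn Nat.one_pos⟩
      (k ⟨n - 1, Nat.sub_lt hn Nat.one_pos⟩ + 1)) := by
  set last : Fin n := ⟨n - 1, Nat.sub_lt hn Nat.one_pos⟩
  set k' := Function.update k last (k last + 1) with hk'
  have hsum' := TT_summable hn k'
    (fun i => by
      rw [hk', Function.update_apply]; split
      · omega
      · exact hk i)
    (by rw [hk', Function.update_self]; have := hk last; omega)
  have h1 : ‖Ath k t‖ ≤ ∑' m : Fin n → ℕ,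
      ‖if athCond n m then t ^ lastExp m / ∏ i, ((m i : ℂ) ^ k i) else 0‖ :=
    norm_tsum_le_tsum_norm (summable_athTerm_norm hn k hk ht)
  have h2 : (∑' m : Fin n → ℕ,
      ‖if athCond n m then t ^ lastExp m / ∏ i, ((m i : ℂ) ^ k i) else 0‖)
      ≤ ∑' m : Fin n → ℕ, (if athCond n m then (∏ i, ((m i : ℝ) ^ k' i))⁻¹ else 0) :=
    Summable.tsum_le_tsum (athTerm_le hn k ht) (summable_athTerm_norm hn k hk ht) hsum'
  have h3 : (∑' m : Fin n → ℕ, (if athCond n m then (∏ i, ((m i : ℝ) ^ k' i))⁻¹ else 0))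
      ≤ Tval k' := by
    rw [Tval]
    have h0 : (0:ℝ) ≤ ∑' m : Fin n → ℕ,
        (if athCond n m then (∏ i, ((m i : ℝ) ^ k' i))⁻¹ else 0) :=
      tsum_nonneg fun m => by split <;> positivity
    exact le_mul_of_one_le_left h0 (one_le_pow₀ (by norm_num : (1:ℝ) ≤ 2))
  linarith

lemma Tval_mono {n : ℕ} (hn : 0 < n) (c c' : Fin n → ℕ)
    (hc : ∀ i, 1 ≤ c i) (hcl : 2 ≤ c ⟨n - 1, Nat.sub_lt hn Nat.one_pos⟩)
    (hc' : ∀ i, 1 ≤ c' i) (hcl' : 2 ≤ c' ⟨n - 1, Nat.sub_lt hn Nat.one_pos⟩)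
    (hle : ∀ i, c i ≤ c' i) : Tval c' ≤ Tval c := by
  rw [Tval, Tval]
  apply mul_le_mul_of_nonneg_left _ (by positivity)
  apply Summable.tsum_le_tsum _ (TT_summable hn c' hc' hcl') (TT_summable hn c hc hcl)
  intro m
  by_cases h : athCond n m
  · rw [if_pos h, if_pos h]
    have hm1 : ∀ i, (1:ℝ) ≤ (m i : ℝ) := fun i => by exact_mod_cast athCond_one_le h i
    apply inv_anti₀ (Finset.prod_pos fun i _ => pow_pos (lt_of_lt_of_le one_pos (hm1 i)) _)
    exact Finset.prod_le_prod (fun i _ => by positivity)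
      (fun i _ => pow_le_pow_right₀ (hm1 i) (hle i))
  · rw [if_neg h, if_neg h]

/-! ### The geometric bound `‖Ath 𝐤 t‖ ≤ 1` -/

lemma geom_aux : Summable (fun x : ℕ => ((1:ℝ)/2) ^ (x + 1))
    ∧ (∑' x : ℕ, ((1:ℝ)/2) ^ (x + 1)) = 1 := by
  have hs : Summable (fun x : ℕ => ((1:ℝ)/2) ^ x) :=
    summable_geometric_of_lt_one (by norm_num) (by norm_num)
  have he : ∀ x : ℕ, ((1:ℝ)/2) ^ (x+1) = ((1:ℝ)/2) ^ x * (1/2) := fun x => pow_succ _ _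
  constructor
  · exact (hs.mul_right _).congr fun x => (he x).symm
  · rw [tsum_congr he, tsum_mul_right, tsum_geometric_of_lt_one (by norm_num) (by norm_num)]
    norm_num

def Afun (n : ℕ) (m : Fin n → ℕ) : ℝ := if athCond n m then ((1:ℝ)/2) ^ lastExp m else 0
def Pfun (n : ℕ) (d : Fin n → ℕ) : ℝ := ∏ i, ((1:ℝ)/2) ^ (d i + 1)

lemma Afun_nonneg (n : ℕ) (m : Fin n → ℕ) : 0 ≤ Afun n m := by
  rw [Afun]; split <;> positivity

lemma Pfun_eq (n : ℕ) (d : Fin n → ℕ) : Pfun n d = ((1:ℝ)/2) ^ (n + ∑ j, d j) := by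
  rw [Pfun, Finset.prod_pow_eq_pow_sum, Finset.sum_add_distrib]
  simp [add_comm]

lemma ath_le_one {n : ℕ} (hn : 0 < n) (k : Fin n → ℕ) {t : ℂ} (ht : ‖t‖ ≤ 1/2) :
    ‖Ath k t‖ ≤ 1 := by
  obtain ⟨hPsum', hPtsum'⟩ := pi_prod_hasSum geom_aux.1 (fun x => by positivity) n
  have hPsum : Summable (Pfun n) := hPsum'.congr fun d => rfl
  have hPts1 : (∑' d : Fin n → ℕ, Pfun n d) = 1 := by
    rw [show (fun d : Fin n → ℕ => Pfun n d)
        = (fun d : Fin n → ℕ => ∏ i, ((1:ℝ)/2) ^ (d i + 1)) from rfl,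
      hPtsum', geom_aux.2, one_pow]
  have hAP : ∀ d : Fin n → ℕ, Afun n (gapMap n d) ≤ Pfun n d := by
    intro d
    rw [Afun, Pfun_eq]
    by_cases h : athCond n (gapMap n d)
    · rw [if_pos h, lastExp, dif_pos hn, gapMap_last hn d]
    · rw [if_neg h]; positivity
  have hcompSum : Summable (fun d => Afun n (gapMap n d)) :=
    Summable.of_nonneg_of_le (fun d => Afun_nonneg n _) hAP hPsum
  have hvanish : ∀ m ∉ Set.range (gapMap n), Afun n m = 0 := by
    intro m hm
    rw [Afun, if_neg]
    intro h
    exact hm (Set.mem_range.mpr (gapMap_surj h.1 (fun i => (h.2 i).2)))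
  have hAsum : HasSum (Afun n) (∑' d, Afun n (gapMap n d)) :=
    ((gapMap_injective n).hasSum_iff hvanish).mp hcompSum.hasSum
  have hAts : (∑' m, Afun n m) ≤ 1 := by
    rw [hAsum.tsum_eq]
    calc (∑' d, Afun n (gapMap n d)) ≤ ∑' d, Pfun n d := Summable.tsum_le_tsum hAP hcompSum hPsum
      _ = 1 := hPts1
  have hterm : ∀ m : Fin n → ℕ,
      ‖if athCond n m then t ^ lastExp m / ∏ i, ((m i : ℂ) ^ k i) else 0‖ ≤ Afun n m := by
    intro m
    rw [Afun]
    by_cases h : athCond n m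
    · rw [if_pos h, if_pos h, athTerm_norm_eq]
      have hm1 : ∀ i, (1:ℝ) ≤ (m i : ℝ) := fun i => by exact_mod_cast athCond_one_le h i
      have hge1 : (1:ℝ) ≤ ∏ i, ((m i : ℝ) ^ k i) := by
        calc (1:ℝ) = ∏ _i : Fin n, 1 := by simp
          _ ≤ ∏ i, ((m i : ℝ) ^ k i) := Finset.prod_le_prod (fun i _ => zero_le_one)
              (fun i _ => one_le_pow₀ (hm1 i))
      calc ‖t‖ ^ lastExp m / ∏ i, ((m i : ℝ) ^ k i) ≤ ‖t‖ ^ lastExp m := by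
            apply div_le_self (by positivity) hge1
        _ ≤ ((1:ℝ)/2) ^ lastExp m := pow_le_pow_left₀ (norm_nonneg t) ht _
    · rw [if_neg h, if_neg h, norm_zero]
  have hnsum : Summable (fun m : Fin n → ℕ =>
      ‖if athCond n m then t ^ lastExp m / ∏ i, ((m i : ℂ) ^ k i) else 0‖) :=
    Summable.of_nonneg_of_le (fun m => norm_nonneg _) hterm hAsum.summable
  calc ‖Ath k t‖ ≤ ∑' m : Fin n → ℕ,
        ‖if athCond n m then t ^ lastExp m / ∏ i, ((m i : ℂ) ^ k i) else 0‖ :=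
      norm_tsum_le_tsum_norm hnsum
    _ ≤ ∑' m, Afun n m := Summable.tsum_le_tsum hterm hnsum hAsum.summable
    _ ≤ 1 := hAts

/-! ### Counting indices -/

def Sfn {n : ℕ} (κ : Fin n → ℕ) (v : ℕ) : ℕ :=
  ∑ i ∈ Finset.univ.filter (fun i : Fin n => i.val ≤ v), κ i

lemma Sfn_one_le {n : ℕ} (hn : 0 < n) {κ : Fin n → ℕ} (hκ : ∀ i, 1 ≤ κ i) (v : ℕ) :
    1 ≤ Sfn κ v := by
  have h0 : (⟨0, hn⟩ : Fin n) ∈ Finset.univ.filter (fun i : Fin n => i.val ≤ v) := by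
    simp
  calc 1 ≤ κ ⟨0, hn⟩ := hκ _
    _ ≤ Sfn κ v := Finset.single_le_sum (fun i _ => Nat.zero_le _) h0

lemma Sfn_lt {n : ℕ} {κ : Fin n → ℕ} (hκ : ∀ i, 1 ≤ κ i) {v v' : ℕ} (hvv : v < v')
    (hv' : v' < n) : Sfn κ v < Sfn κ v' := by
  apply Finset.sum_lt_sum_of_subset
  · intro i hi
    simp only [Finset.mem_filter, Finset.mem_univ, true_and] at hi ⊢
    omega
  · exact (Finset.mem_filter.mpr ⟨Finset.mem_univ _, le_refl _⟩ :
      (⟨v', hv'⟩ : Fin n) ∈ Finset.univ.filter (fun i : Fin n => i.val ≤ v'))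
  · simp only [Finset.mem_filter, Finset.mem_univ, true_and]
    omega
  · exact hκ _
  · intro j _ _; exact Nat.zero_le _

lemma Sfn_last {n : ℕ} (hn : 0 < n) {κ : Fin n → ℕ} : Sfn κ (n - 1) = ∑ i, κ i := by
  unfold Sfn
  congr 1
  apply Finset.filter_true_of_mem
  intro i _
  omega

lemma Sfn_zero {n : ℕ} (hn : 0 < n) (κ : Fin n → ℕ) : Sfn κ 0 = κ ⟨0, hn⟩ := by
  unfold Sfn
  rw [show Finset.univ.filter (fun i : Fin n => i.val ≤ 0) = {⟨0, hn⟩} from ?_,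
    Finset.sum_singleton]
  ext i
  simp only [Finset.mem_filter, Finset.mem_univ, true_and, Finset.mem_singleton, Fin.ext_iff]
  omega

lemma Sfn_succ {n : ℕ} (κ : Fin n → ℕ) {v : ℕ} (hv : v + 1 < n) :
    Sfn κ (v + 1) = Sfn κ v + κ ⟨v + 1, hv⟩ := by
  unfold Sfn
  rw [show Finset.univ.filter (fun i : Fin n => i.val ≤ v + 1)
      = insert ⟨v + 1, hv⟩ (Finset.univ.filter (fun i : Fin n => i.val ≤ v)) from ?_,
    Finset.sum_insert (by simp)]
  · ring
  · ext i
    simp only [Finset.mem_insert, Finset.mem_filter, Finset.mem_univ, true_and, Fin.ext_iff]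
    omega

lemma Sfn_eq_of {n : ℕ} (hn : 0 < n) {κ κ' : Fin n → ℕ} (hκ : ∀ i, 1 ≤ κ i)
    (hκ' : ∀ i, 1 ≤ κ' i) (hsum : ∑ i, κ i = ∑ i, κ' i)
    (heq : ∀ v, v < n - 1 → Sfn κ v = Sfn κ' v) : κ = κ' := by
  have hS : ∀ v, v < n → Sfn κ v = Sfn κ' v := by
    intro v hv
    rcases lt_or_ge v (n - 1) with h | h
    · exact heq v h
    · have hv' : v = n - 1 := by omega
      subst hv'
      rw [Sfn_last hn, Sfn_last hn, hsum]
  funext i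
  obtain ⟨v, hv⟩ := i
  match v, hv with
  | 0, hv => rw [← Sfn_zero hv κ, ← Sfn_zero hv κ', hS 0 hv]
  | w + 1, hv =>
    have h1 := Sfn_succ κ (v := w) hv
    have h2 := Sfn_succ κ' (v := w) hv
    have := hS (w + 1) hv
    have := hS w (by omega)
    omega

lemma card_IdxCond_le (k n s : ℕ) (hn : 1 ≤ n) :
    ((Fintype.piFinset (fun _ : Fin n => Finset.range (k + 1))).filter
      (fun κ => IdxCond k n s κ)).card ≤ (k - 1).choose (n - 1) := by
  classical
  have hn0 : 0 < n := hn
  set ψ : (Fin n → ℕ) → Finset ℕ :=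
    fun κ => Finset.image (fun j : Fin (n - 1) => Sfn κ j.val - 1) Finset.univ with hψ
  calc ((Fintype.piFinset (fun _ : Fin n => Finset.range (k + 1))).filter
        (fun κ => IdxCond k n s κ)).card
      ≤ (Finset.powersetCard (n - 1) (Finset.range (k - 1))).card := ?_
    _ = (k - 1).choose (n - 1) := by
        rw [Finset.card_powersetCard, Finset.card_range]
  apply Finset.card_le_card_of_injOn ψ
  · intro κ hκmem
    have hκ : IdxCond k n s κ := (Finset.mem_filter.mp hκmem).2
    rw [Finset.mem_coe, Finset.mem_powersetCard]
    constructor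
    · intro x hx
      rw [hψ] at hx
      simp only [Finset.mem_image, Finset.mem_univ, true_and] at hx
      obtain ⟨j, hj⟩ := hx
      have hjlt : (j : ℕ) < n - 1 := j.isLt
      have h1 : 1 ≤ Sfn κ j.val := Sfn_one_le hn0 hκ.1 _
      have h2 : Sfn κ j.val < Sfn κ (n - 1) := Sfn_lt hκ.1 (by omega) (by omega)
      rw [Sfn_last hn0, hκ.2.1] at h2
      rw [Finset.mem_range]
      omega
    · rw [hψ]
      rw [Finset.card_image_of_injOn, Finset.card_univ, Fintype.card_fin]
      intro j _ j' _ hjj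
      simp only at hjj
      have h1 : 1 ≤ Sfn κ j.val := Sfn_one_le hn0 hκ.1 _
      have h1' : 1 ≤ Sfn κ j'.val := Sfn_one_le hn0 hκ.1 _
      by_contra hne
      have hne' : (j : ℕ) ≠ (j' : ℕ) := fun h => hne (Fin.ext h)
      rcases Nat.lt_or_ge (j : ℕ) (j' : ℕ) with h | h
      · have := Sfn_lt hκ.1 h (by omega)
        omega
      · have := Sfn_lt hκ.1 (by omega : (j':ℕ) < (j:ℕ)) (by omega)
        omega
  · intro κ hκmem κ' hκmem' hψeq
    simp only [Finset.coe_filter] at hκmem hκmem'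
    have hκ : IdxCond k n s κ := hκmem.2
    have hκ' : IdxCond k n s κ' := hκmem'.2
    set u : Fin (n - 1) → ℕ := fun j => Sfn κ j.val - 1 with hu
    set u' : Fin (n - 1) → ℕ := fun j => Sfn κ' j.val - 1 with hu'
    have hmono : StrictMono u := by
      intro j j' hj
      have h1 : 1 ≤ Sfn κ j.val := Sfn_one_le hn0 hκ.1 _
      have h2 := Sfn_lt hκ.1 (show (j:ℕ) < (j':ℕ) from hj) (by omega)
      rw [hu]
      simp only
      omega
    have hmono' : StrictMono u' := by
      intro j j' hj
      have h1 : 1 ≤ Sfn κ' j.val := Sfn_one_le hn0 hκ'.1 _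
      have h2 := Sfn_lt hκ'.1 (show (j:ℕ) < (j':ℕ) from hj) (by omega)
      rw [hu']
      simp only
      omega
    have hrange : Set.range u = Set.range u' := by
      have h1 : Set.range u = ↑(Finset.image u Finset.univ) := by
        rw [Finset.coe_image, Finset.coe_univ, Set.image_univ]
      have h2 : Set.range u' = ↑(Finset.image u' Finset.univ) := by
        rw [Finset.coe_image, Finset.coe_univ, Set.image_univ]
      rw [h1, h2, show Finset.image u Finset.univ = Finset.image u' Finset.univ from hψeq]
    haveI : WellFoundedLT (Fin (n - 1)) := Finite.to_wellFoundedLT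
    have huu : u = u' :=
      (StrictMono.range_inj (β := Fin (n-1)) (γ := ℕ) hmono hmono').mp hrange
    apply Sfn_eq_of hn0 hκ.1 hκ'.1 (by rw [hκ.2.1, hκ'.2.1])
    intro v hv
    have := congrFun huu ⟨v, hv⟩
    rw [hu, hu'] at this
    simp only at this
    have h1 : 1 ≤ Sfn κ v := Sfn_one_le hn0 hκ.1 _
    have h1' : 1 ≤ Sfn κ' v := Sfn_one_le hn0 hκ'.1 _
    omega

/-- Bounds on `|t| ≤ 1/2`: `|Ath(𝐤;t)| ≤ T(k₁,…,kₙ+1) ≤ T(1,…,1,2)`, and consequently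
`|G(k,n,s;t)| ≤ 2^{n+1} C(k−1,n−1)`. -/
theorem ath_and_G_bounds :
    (∀ (n : ℕ) (hn : 0 < n) (k : Fin n → ℕ), (∀ i, 1 ≤ k i) → ∀ t : ℂ, ‖t‖ ≤ 1 / 2 →
      ‖Ath k t‖ ≤ Tval (Function.update k ⟨n - 1, Nat.sub_lt hn Nat.one_pos⟩
          (k ⟨n - 1, Nat.sub_lt hn Nat.one_pos⟩ + 1)) ∧
      Tval (Function.update k ⟨n - 1, Nat.sub_lt hn Nat.one_pos⟩
          (k ⟨n - 1, Nat.sub_lt hn Nat.one_pos⟩ + 1))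
        ≤ Tval (fun i : Fin n => if (i : ℕ) = n - 1 then 2 else 1)) ∧
    (∀ k n s : ℕ, 1 ≤ k → 1 ≤ n → ∀ t : ℂ, ‖t‖ ≤ 1 / 2 →
      ‖G k n s t‖ ≤ 2 ^ (n + 1) * ((k - 1).choose (n - 1))) := by
  constructor
  · intro n hn k hk t ht
    refine ⟨ath_le_Tval hn k hk ht, ?_⟩
    set last : Fin n := ⟨n - 1, Nat.sub_lt hn Nat.one_pos⟩
    apply Tval_mono hn (fun i : Fin n => if (i : ℕ) = n - 1 then 2 else 1)
      (Function.update k last (k last + 1))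
    · intro i; split <;> omega
    · simp
    · intro i
      rw [Function.update_apply]
      split
      · omega
      · exact hk i
    · rw [Function.update_self]; have := hk last; omega
    · intro i
      rw [Function.update_apply]
      by_cases hi : i = last
      · rw [if_pos hi, if_pos (show (i : ℕ) = n - 1 from hi ▸ rfl)]
        have := hk last
        omega
      · rw [if_neg hi, if_neg (show ¬ (i : ℕ) = n - 1 from fun h => hi (Fin.ext h))]
        exact hk i
  · intro k n s hk hn t ht
    classical
    have hn0 : 0 < n := hn
    set S := Fintype.piFinset (fun _ : Fin n => Finset.range (k + 1)) with hS
    have hvan : ∀ κ ∉ S, (if IdxCond k n s κ then Ath κ t else 0) = 0 := by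
      intro κ hκ
      rw [if_neg]
      intro h
      apply hκ
      rw [hS, Fintype.mem_piFinset]
      intro i
      rw [Finset.mem_range]
      have hle : κ i ≤ ∑ j, κ j :=
        Finset.single_le_sum (fun j _ => Nat.zero_le _) (Finset.mem_univ i)
      rw [h.2.1] at hle
      omega
    have h2n : ‖(2:ℂ) ^ n‖ = (2:ℝ) ^ n := by
      rw [norm_pow]
      norm_num
    have hsumle : ‖∑ κ ∈ S, (if IdxCond k n s κ then Ath κ t else 0)‖
        ≤ ((S.filter (fun κ => IdxCond k n s κ)).card : ℝ) := by
      calc ‖∑ κ ∈ S, (if IdxCond k n s κ then Ath κ t else 0)‖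
          ≤ ∑ κ ∈ S, ‖if IdxCond k n s κ then Ath κ t else 0‖ := norm_sum_le _ _
        _ ≤ ∑ κ ∈ S, (if IdxCond k n s κ then (1:ℝ) else 0) := by
            apply Finset.sum_le_sum
            intro κ _
            by_cases h : IdxCond k n s κ
            · rw [if_pos h, if_pos h]
              exact ath_le_one hn0 κ ht
            · rw [if_neg h, if_neg h, norm_zero]
        _ = ((S.filter (fun κ => IdxCond k n s κ)).card : ℝ) := by
            rw [Finset.sum_boole]
    have hcard : ((S.filter (fun κ => IdxCond k n s κ)).card : ℝ)
        ≤ ((k - 1).choose (n - 1) : ℝ) := by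
      exact_mod_cast card_IdxCond_le k n s hn
    rw [G, tsum_eq_sum hvan, norm_mul, h2n]
    calc (2:ℝ) ^ n * ‖∑ κ ∈ S, (if IdxCond k n s κ then Ath κ t else 0)‖
        ≤ (2:ℝ) ^ n * ((k - 1).choose (n - 1) : ℝ) :=
          mul_le_mul_of_nonneg_left (le_trans hsumle hcard) (by positivity)
      _ ≤ (2:ℝ) ^ (n + 1) * ((k - 1).choose (n - 1) : ℝ) := by
          apply mul_le_mul_of_nonneg_right _ (by positivity)
          apply pow_le_pow_right₀ (by norm_num) (by omega)


end
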